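/- Let d > 1 be even and let S be the numerical semigroup generated by d/2 and 2d-1. Then for every j with 0 ≤ j ≤ d-2, the number of elements of S in [0, jd+1) equals (j+1)(j+2)/2. -/
import Mathlib

lemma sum_aux0 (j : ℕ) :
    ∑ b ∈ Finset.range (j / 2 + 1), (2 * (j - 2 * b) + 1) = (j + 1) * (j + 2) / 2 := by
  rw [← Finset.sum_range_reflect]
  have hcongr : ∀ b ∈ Finset.range (j/2+1),
      2 * (j - 2 * (j/2+1-1-b)) + 1 = 4*b + (2*(j%2)+1) := by
    intro b hb; rw [Finset.mem_range] at hb; omega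
  rw [Finset.sum_congr rfl hcongr, Finset.sum_add_distrib, Finset.sum_const, Finset.card_range]
  have hS := Finset.sum_range_id_mul_two (j / 2 + 1)
  set S := ∑ i ∈ Finset.range (j / 2 + 1), i with hSdef
  have h4 : ∑ b ∈ Finset.range (j/2+1), 4 * b = 4 * S := by
    rw [hSdef, Finset.mul_sum]
  rw [h4]
  have h2 : S * 2 = (j/2+1) * (j/2) := by simpa using hS
  have key : (j + 1) * (j + 2) = 2 * (4 * S + (j/2+1) • (2 * (j % 2) + 1)) := by
    rw [smul_eq_mul]
    obtain ⟨k, r, hr, hjk⟩ : ∃ k r, r < 2 ∧ j = 2*k + r := ⟨j/2, j%2, by omega, by omega⟩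
    have hk : j / 2 = k := by omega
    rw [hk] at h2
    have hrr : j % 2 = r := by omega
    rw [hk, hrr]
    subst hjk
    interval_cases r <;> nlinarith [h2]
  omega

open scoped Classical in
theorem semigroup_counting_case_b
    (d : ℕ) (hd : 1 < d) (hdeven : 2 ∣ d) (j : ℕ) (hj : j ≤ d - 2) :
    ((Finset.range (j * d + 1)).filter
        (fun n => ∃ a b : ℕ, n = a * (d / 2) + b * (2 * d - 1))).card
      = (j + 1) * (j + 2) / 2 := by
  obtain ⟨m, rfl⟩ := hdeven
  have hm : 1 ≤ m := by omega
  have hjm : j ≤ 2*m - 2 := by omega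
  have hm2 : (2 * m) / 2 = m := by omega
  simp only [hm2]
  set e := 2 * (2 * m) - 1 with he
  have he1 : e + 1 = 4 * m := by omega
  have hcard : ((Finset.range (j / 2 + 1)).sigma
      (fun b => Finset.range (2 * (j - 2 * b) + 1))).card
      = ((Finset.range (j * (2 * m) + 1)).filter
        (fun n => ∃ a b : ℕ, n = a * m + b * e)).card := by
    apply Finset.card_bij (fun p _ => p.2 * m + p.1 * e)
    · -- maps into
      rintro ⟨b, a⟩ hp
      simp only [Finset.mem_sigma, Finset.mem_range] at hp
      simp only [Finset.mem_filter, Finset.mem_range]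
      refine ⟨?_, a, b, rfl⟩
      obtain ⟨hb, ha⟩ := hp
      obtain ⟨t, ht, hat⟩ : ∃ t, 2*b + t = j ∧ a ≤ 2*t := ⟨j - 2*b, by omega, by omega⟩
      have h1 : a * m ≤ 2*t*m := Nat.mul_le_mul_right m hat
      have h2 : b * e ≤ b * (4*m) := Nat.mul_le_mul_left b (by omega)
      calc a * m + b * e ≤ 2*t*m + b*(4*m) := add_le_add h1 h2
        _ = (2*b + t) * (2*m) := by ring
        _ = j * (2*m) := by rw [ht]
        _ < j * (2*m) + 1 := by omega
    · -- injective
      rintro ⟨b1, a1⟩ hp1 ⟨b2, a2⟩ hp2 heqn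
      simp only [Finset.mem_sigma, Finset.mem_range] at hp1 hp2
      simp only at heqn
      have hb1 : b1 < m := by omega
      have hb2 : b2 < m := by omega
      have hme : ∀ x : ℕ, x * e + x = x * (4*m) := fun x => by
        rw [← he1, mul_add_one]
      have h2 : b2 + (a1 + b1*4) * m = b1 + (a2 + b2*4) * m := by
        have e1 := hme b1
        have e2 := hme b2
        have r1 : b2 + (a1 + b1*4) * m = a1*m + b1*(4*m) + b2 := by ring
        have r2 : b1 + (a2 + b2*4) * m = a2*m + b2*(4*m) + b1 := by ring
        omega
      have h3 : b2 % m = b1 % m := by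
        have := congrArg (· % m) h2
        simpa [Nat.add_mul_mod_self_right] using this
      rw [Nat.mod_eq_of_lt hb2, Nat.mod_eq_of_lt hb1] at h3
      subst h3
      have h4 : a1 * m = a2 * m := by omega
      have h5 : a1 = a2 := Nat.eq_of_mul_eq_mul_right (by omega) h4
      subst h5
      rfl
    · -- surjective
      rintro n hn
      simp only [Finset.mem_filter, Finset.mem_range] at hn
      obtain ⟨hnlt, a, b, hnab⟩ := hn
      set b' := b % m with hb'def
      set a' := a + (b / m) * e with ha'def
      have hbm : b' < m := Nat.mod_lt _ (by omega)
      have hrep : a' * m + b' * e = n := by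
        have hb : b = m * (b / m) + b' := (Nat.div_add_mod b m).symm
        calc a' * m + b' * e = a * m + (m * (b/m) + b') * e := by rw [ha'def]; ring
          _ = a * m + b * e := by rw [← hb]
          _ = n := hnab.symm
      have h5 : (a' + 4*b') * m = n + b' := by
        have hh : b' * e + b' = b' * (4*m) := by rw [← he1, mul_add_one]
        have r1 : (a' + 4*b') * m = a' * m + b' * (4*m) := by ring
        omega
      have h6 : (a' + 4*b') * m < (2*j+1) * m := by
        have r2 : (2*j+1) * m = j * (2*m) + m := by ring
        omega
      have h7 : a' + 4*b' < 2*j+1 := Nat.lt_of_mul_lt_mul_right h6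
      refine ⟨⟨b', a'⟩, ?_, hrep⟩
      simp only [Finset.mem_sigma, Finset.mem_range]
      omega
  rw [← hcard, Finset.card_sigma]
  simp only [Finset.card_range]
  exact sum_aux0 j
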